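/- A partially ordered set P is an injective object in the category of partially ordered sets and monotone maps, with respect to embeddings (order-reflecting injective monotone maps), if and only if P is a complete lattice. -/

import Mathlib

universe u

/-- a partially ordered set `P` is injective in the category of
posets and monotone maps with respect to embeddings (order-reflecting injective
monotone maps) iff `P` is a complete lattice (i.e. its partial order underlies a
complete lattice structure). -/
theorem stmt7 (P : Type u) [inst : PartialOrder P] :
    (∀ (A B : Type u) [PartialOrder A] [PartialOrder B] (m : A → B),
        (∀ a a', a ≤ a' ↔ m a ≤ m a') →
        ∀ f : A → P, Monotone f → ∃ g : B → P, Monotone g ∧ g ∘ m = f) ↔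
      ∃ L : CompleteLattice P, L.toPartialOrder = inst := by
  constructor
  · intro h
    obtain ⟨g, hg, hgm⟩ := h P (Set P) Set.Iic
      (fun a a' => (Set.Iic_subset_Iic).symm) id monotone_id
    letI : SupSet P := ⟨fun S => g (⋃ p ∈ S, Set.Iic p)⟩
    refine ⟨completeLatticeOfSup P (fun S => ?_), rfl⟩
    constructor
    · intro p hp
      have : Set.Iic p ⊆ ⋃ p ∈ S, Set.Iic p := Set.subset_biUnion_of_mem hp
      have := hg this
      rwa [show g (Set.Iic p) = p from congrFun hgm p] at this
    · intro q hq
      have : (⋃ p ∈ S, Set.Iic p) ⊆ Set.Iic q := by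
        apply Set.iUnion₂_subset
        intro p hp
        exact Set.Iic_subset_Iic.2 (hq hp)
      have := hg this
      rwa [show g (Set.Iic q) = q from congrFun hgm q] at this
  · rintro ⟨L, rfl⟩
    intro A B _ _ m hm f hf
    refine ⟨fun b => sSup (f '' {a | m a ≤ b}), ?_, ?_⟩
    · intro b b' hb
      exact sSup_le_sSup (Set.image_mono fun a ha => le_trans ha hb)
    · funext a
      apply le_antisymm
      · apply sSup_le
        rintro _ ⟨a', ha', rfl⟩
        exact hf ((hm a' a).2 ha')
      · exact le_sSup ⟨a, le_refl _, rfl⟩
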